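/- arXiv:2106.00554 — 2 statements merged into one kernel-verified Lean document; each statement's English description precedes it below -/
import Mathlib

section
/- Let j ∈ ℕ and let n, l ∈ ℕ satisfy n < 2^j and l < 2^j. Then w_n(2^{−j} l) = w_l(2^{−j} n). -/
open MeasureTheory

/-- `natDigit n i` is the `i`-th binary digit `n^(i)` (for `i ≥ 1`) of `n ∈ ℕ`,
so that `n = Σ_{i ≥ 1} n^(i) 2^(i-1)`. -/
def natDigit (n i : ℕ) : ℕ := (n / 2 ^ (i - 1)) % 2

/-- `dyadicDigit x i` is the `i`-th dyadic digit `x^(i) = ⌊2^i x⌋ − 2⌊2^(i−1) x⌋`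
(for `i ≥ 1`) of `x ∈ [0,1)`. -/
noncomputable def dyadicDigit (x : ℝ) (i : ℕ) : ℤ :=
  ⌊(2 : ℝ) ^ i * x⌋ - 2 * ⌊(2 : ℝ) ^ (i - 1) * x⌋

/-- The sequency-ordered Walsh function
`w_n(x) = (−1)^{Σ_{i≥1} (n^(i) + n^(i+1)) x^(i)}`; the sum is finite since
`n^(i) = 0` for `i > n`, so it may be truncated at `i = n + 1`. -/
noncomputable def walsh (n : ℕ) (x : ℝ) : ℝ :=
  (-1 : ℝ) ^ ∑ i ∈ Finset.Icc 1 (n + 1),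
    (natDigit n i + natDigit n (i + 1)) * (dyadicDigit x i).toNat

/-- The dyadic XOR `x ⊕ y := Σ_{i≥1} |x^(i) − y^(i)| 2^{−i}` of `x, y ∈ [0,1)`. -/
noncomputable def dyadicXor (x y : ℝ) : ℝ :=
  ∑' i : ℕ, |(dyadicDigit x (i + 1) : ℝ) - (dyadicDigit y (i + 1) : ℝ)| / 2 ^ (i + 1)

lemma natDigit_eq_zero {n i : ℕ} (h : n < 2 ^ (i - 1)) : natDigit n i = 0 := by
  simp [natDigit, Nat.div_eq_of_lt h]

lemma int_floor_nat_div (a b : ℕ) : ⌊(a : ℝ) / (b : ℝ)⌋ = ((a / b : ℕ) : ℤ) := by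
  rw [← Int.natCast_floor_eq_floor (by positivity), Nat.floor_div_eq_div]

lemma dyadic_digit_eq (l j i : ℕ) (hi : 1 ≤ i) :
    (dyadicDigit ((l : ℝ) / 2 ^ j) i).toNat
      = if i ≤ j then natDigit l (j + 1 - i) else 0 := by
  have key1 : ∀ a b : ℕ, a ≤ b → (2:ℝ)^a * ((l:ℝ)/2^b) = (l:ℝ) / ((2^(b-a):ℕ):ℝ) := by
    intro a b hab
    have h2 : (2:ℝ)^b = 2^(b-a) * 2^a := by rw [← pow_add]; congr 1; omega
    push_cast
    rw [h2]
    field_simp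
  have key2 : ∀ a b : ℕ, b ≤ a → (2:ℝ)^a * ((l:ℝ)/2^b) = ((l * 2^(a-b) : ℕ):ℝ) := by
    intro a b hab
    have h2 : (2:ℝ)^a = 2^(a-b) * 2^b := by rw [← pow_add]; congr 1; omega
    push_cast
    rw [h2]
    field_simp
  unfold dyadicDigit
  split_ifs with h
  · rw [key1 i j h, key1 (i-1) j (le_trans (Nat.sub_le i 1) h),
      int_floor_nat_div, int_floor_nat_div]
    have h4 : l / 2 ^ (j - (i-1)) = (l / 2 ^ (j - i)) / 2 := by
      rw [(by omega : j - (i - 1) = (j - i) + 1), pow_succ, Nat.div_div_eq_div_mul]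
    have h5 : natDigit l (j + 1 - i) = (l / 2 ^ (j - i)) % 2 := by
      unfold natDigit; rw [(by omega : j + 1 - i - 1 = j - i)]
    rw [h4, h5]
    omega
  · rw [key2 i j (by omega), key2 (i-1) j (by omega), Int.floor_natCast, Int.floor_natCast]
    have : i - j = (i - 1 - j) + 1 := by omega
    rw [this]
    push_cast
    ring_nf
    omega

lemma natDigit_high {n i j : ℕ} (hn : n < 2 ^ j) (hij : j + 1 ≤ i) : natDigit n i = 0 :=
  natDigit_eq_zero (lt_of_lt_of_le hn (Nat.pow_le_pow_right (by norm_num) (by omega)))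

lemma natDigit_big {n i : ℕ} (hi : n + 2 ≤ i) : natDigit n i = 0 :=
  natDigit_eq_zero (lt_of_lt_of_le (Nat.lt_two_pow_self (n := n))
    (Nat.pow_le_pow_right (by norm_num) (by omega)))

lemma walsh_eq (j n l : ℕ) (hn : n < 2 ^ j) :
    walsh n ((l : ℝ) / 2 ^ j)
      = (-1 : ℝ) ^ ∑ i ∈ Finset.Icc 1 (j + 1),
          (natDigit n i + natDigit n (i + 1)) * natDigit l (j + 1 - i) := by
  unfold walsh
  congr 1
  calc ∑ i ∈ Finset.Icc 1 (n + 1),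
        (natDigit n i + natDigit n (i + 1)) * (dyadicDigit ((l : ℝ) / 2 ^ j) i).toNat
      = ∑ i ∈ Finset.Icc 1 (n + j + 2),
        (natDigit n i + natDigit n (i + 1)) * (dyadicDigit ((l : ℝ) / 2 ^ j) i).toNat := by
        apply Finset.sum_subset (Finset.Icc_subset_Icc_right (by omega))
        intro i hi hni
        simp only [Finset.mem_Icc] at hi hni
        rw [natDigit_big (n := n) (by omega), natDigit_big (n := n) (by omega)]; simp
    _ = ∑ i ∈ Finset.Icc 1 (n + j + 2),
        (natDigit n i + natDigit n (i + 1)) * natDigit l (j + 1 - i) := by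
        apply Finset.sum_congr rfl
        intro i hi
        simp only [Finset.mem_Icc] at hi
        rw [dyadic_digit_eq l j i hi.1]
        by_cases h : i ≤ j
        · rw [if_pos h]
        · rw [if_neg h, natDigit_high hn (by omega), natDigit_high hn (by omega)]; simp
    _ = ∑ i ∈ Finset.Icc 1 (j + 1),
        (natDigit n i + natDigit n (i + 1)) * natDigit l (j + 1 - i) := by
        symm
        apply Finset.sum_subset (Finset.Icc_subset_Icc_right (by omega))
        intro i hi hni
        simp only [Finset.mem_Icc] at hi hni
        rw [natDigit_high hn (by omega), natDigit_high hn (by omega)]; simp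

lemma P_symm (j n l : ℕ) (hn : n < 2 ^ j) (hl : l < 2 ^ j) :
    ∑ i ∈ Finset.Icc 1 (j + 1), natDigit n i * natDigit l (j + 1 - i)
      = ∑ i ∈ Finset.Icc 1 (j + 1), natDigit l i * natDigit n (j + 1 - i) := by
  have shrink : ∀ m k : ℕ, m < 2 ^ j →
      ∑ i ∈ Finset.Icc 1 (j + 1), natDigit m i * natDigit k (j + 1 - i)
        = ∑ i ∈ Finset.Icc 1 j, natDigit m i * natDigit k (j + 1 - i) := by
    intro m k hm
    symm
    apply Finset.sum_subset (Finset.Icc_subset_Icc_right (by omega))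
    intro i hi hni
    simp only [Finset.mem_Icc] at hi hni
    rw [natDigit_high hm (by omega), zero_mul]
  rw [shrink n l hn, shrink l n hl]
  apply Finset.sum_nbij' (fun i => j + 1 - i) (fun i => j + 1 - i)
  · intro a ha; simp only [Finset.mem_Icc] at *; omega
  · intro a ha; simp only [Finset.mem_Icc] at *; omega
  · intro a ha; simp only [Finset.mem_Icc] at *; omega
  · intro a ha; simp only [Finset.mem_Icc] at *; omega
  · intro a ha
    simp only [Finset.mem_Icc] at ha
    rw [(by omega : j + 1 - (j + 1 - a) = a)]
    ring

lemma Q_eq (j n l : ℕ) (hn : n < 2 ^ j) :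
    ∑ i ∈ Finset.Icc 1 (j + 1), natDigit n (i + 1) * natDigit l (j + 1 - i)
      = ∑ i ∈ Finset.Icc 2 j, natDigit n (j + 2 - i) * natDigit l i := by
  calc ∑ i ∈ Finset.Icc 1 (j + 1), natDigit n (i + 1) * natDigit l (j + 1 - i)
      = ∑ i ∈ Finset.Icc 1 j, natDigit n (i + 1) * natDigit l (j + 1 - i) := by
        symm
        apply Finset.sum_subset (Finset.Icc_subset_Icc_right (by omega))
        intro i hi hni
        simp only [Finset.mem_Icc] at hi hni
        rw [natDigit_high hn (by omega), zero_mul]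
    _ = ∑ i ∈ Finset.Icc 1 j, natDigit n (j + 2 - i) * natDigit l i := by
        apply Finset.sum_nbij' (fun i => j + 1 - i) (fun i => j + 1 - i)
        · intro a ha; simp only [Finset.mem_Icc] at *; omega
        · intro a ha; simp only [Finset.mem_Icc] at *; omega
        · intro a ha; simp only [Finset.mem_Icc] at *; omega
        · intro a ha; simp only [Finset.mem_Icc] at *; omega
        · intro a ha
          simp only [Finset.mem_Icc] at ha
          rw [(by omega : j + 2 - (j + 1 - a) = a + 1)]
    _ = ∑ i ∈ Finset.Icc 2 j, natDigit n (j + 2 - i) * natDigit l i := by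
        symm
        apply Finset.sum_subset (Finset.Icc_subset_Icc_left (by omega))
        intro i hi hni
        simp only [Finset.mem_Icc] at hi hni
        rw [(by omega : j + 2 - i = j + 1), natDigit_high hn (by omega), zero_mul]

lemma R_symm (j n l : ℕ) :
    ∑ i ∈ Finset.Icc 2 j, natDigit n (j + 2 - i) * natDigit l i
      = ∑ i ∈ Finset.Icc 2 j, natDigit l (j + 2 - i) * natDigit n i := by
  apply Finset.sum_nbij' (fun i => j + 2 - i) (fun i => j + 2 - i)
  · intro a ha; simp only [Finset.mem_Icc] at *; omega
  · intro a ha; simp only [Finset.mem_Icc] at *; omega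
  · intro a ha; simp only [Finset.mem_Icc] at *; omega
  · intro a ha; simp only [Finset.mem_Icc] at *; omega
  · intro a ha
    simp only [Finset.mem_Icc] at ha
    rw [(by omega : j + 2 - (j + 2 - a) = a)]
    ring

/-- For `n, l < 2^j` one has `w_n(2^{−j} l) = w_l(2^{−j} n)`. -/
theorem walsh_symm (j n l : ℕ) (hn : n < 2 ^ j) (hl : l < 2 ^ j) :
    walsh n ((l : ℝ) / 2 ^ j) = walsh l ((n : ℝ) / 2 ^ j) := by
  rw [walsh_eq j n l hn, walsh_eq j l n hl]
  congr 1
  simp only [add_mul, Finset.sum_add_distrib]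
  rw [P_symm j n l hn hl, Q_eq j n l hn, Q_eq j l n hl, R_symm j n l]
end

section
/- Let ν ≥ 2 be an integer, let m ∈ {0, …, ν−1}, let φ_m^left ∈ L²(ℝ) vanish almost everywhere outside [0, ν+m], and let j ∈ ℕ satisfy 2^j ≥ 2ν. Define the left boundary function φ^bd_{j,m} : [0,1] → ℝ by φ^bd_{j,m}(x) = 2^{j/2} φ_m^left(2^j x). Then for every n ∈ ℕ: ∫₀¹ φ^bd_{j,m}(x) w_n(x) dx = Σ_{l=0}^{ν−1+m} 2^{−j/2} w_n(l/2^j) · ∫₀¹ φ_m^left(x+l) w_{⌊n/2^j⌋}(x) dx. -/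
open MeasureTheory

lemma walsh_abs (k : ℕ) (x : ℝ) : |walsh k x| = 1 := by
  unfold walsh
  rw [abs_pow, abs_neg, abs_one, one_pow]

lemma walsh_trunc (n : ℕ) (x : ℝ) {M : ℕ} (hM : n + 1 ≤ M) :
    walsh n x = (-1 : ℝ) ^ ∑ i ∈ Finset.Icc 1 M,
      (natDigit n i + natDigit n (i + 1)) * (dyadicDigit x i).toNat := by
  unfold walsh
  congr 1
  apply Finset.sum_subset (Finset.Icc_subset_Icc_right hM)
  intro i hi hni
  simp only [Finset.mem_Icc] at hi hni
  have h2 : n + 2 ≤ i := by omega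
  have key : ∀ k : ℕ, n + 2 ≤ k → natDigit n k = 0 := by
    intro k hk
    apply natDigit_eq_zero
    calc n < 2 ^ n := Nat.lt_two_pow_self
    _ ≤ 2 ^ (k - 1) := Nat.pow_le_pow_right (by norm_num) (by omega)
  rw [key i h2, key (i + 1) (by omega)]
  simp

lemma floor_nat_add_div (l : ℕ) {t : ℝ} (ht0 : 0 ≤ t) (ht1 : t < 1) (a : ℕ) :
    ⌊((l : ℝ) + t) / 2 ^ a⌋ = ((l / 2 ^ a : ℕ) : ℤ) := by
  have hpos : (0 : ℝ) < 2 ^ a := by positivity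
  have hdm := Nat.div_add_mod l (2 ^ a)
  have hmlt := Nat.mod_lt l (show 0 < 2 ^ a by positivity)
  rw [Int.floor_eq_iff]
  constructor
  · rw [le_div_iff₀ hpos]
    calc ((((l / 2 ^ a : ℕ) : ℤ) : ℝ)) * 2 ^ a ≤ (l : ℝ) := by
          have h1 : ((l / 2 ^ a * 2 ^ a : ℕ) : ℝ) ≤ ((l : ℕ) : ℝ) := by
            exact_mod_cast Nat.div_mul_le_self l (2 ^ a)
          push_cast at h1
          exact_mod_cast h1
      _ ≤ (l : ℝ) + t := by linarith
  · rw [div_lt_iff₀ hpos]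
    have h2 : (l : ℕ) + 1 ≤ (l / 2 ^ a + 1) * 2 ^ a := by nlinarith [hdm, hmlt]
    calc (l : ℝ) + t < (l : ℝ) + 1 := by linarith
      _ ≤ (((l / 2 ^ a + 1) * 2 ^ a : ℕ) : ℝ) := by exact_mod_cast h2
      _ = ((((l / 2 ^ a : ℕ) : ℤ) : ℝ) + 1) * 2 ^ a := by
          push_cast
          norm_cast

lemma dyadic_digit_low (l : ℕ) {t : ℝ} (ht0 : 0 ≤ t) (ht1 : t < 1) {j i : ℕ}
    (h1 : 1 ≤ i) (hij : i ≤ j) :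
    dyadicDigit (((l : ℝ) + t) / 2 ^ j) i = ((natDigit l (j - i + 1) : ℕ) : ℤ) := by
  unfold dyadicDigit natDigit
  have e1 : (2 : ℝ) ^ i * (((l : ℝ) + t) / 2 ^ j) = ((l : ℝ) + t) / 2 ^ (j - i) := by
    have hj2 : (2 : ℝ) ^ j = 2 ^ (j - i) * 2 ^ i := by
      rw [← pow_add]; congr 1; omega
    rw [hj2]
    field_simp
  have e2 : (2 : ℝ) ^ (i - 1) * (((l : ℝ) + t) / 2 ^ j) = ((l : ℝ) + t) / 2 ^ (j - i + 1) := by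
    have hj2 : (2 : ℝ) ^ j = 2 ^ (j - i + 1) * 2 ^ (i - 1) := by
      rw [← pow_add]; congr 1; omega
    rw [hj2]
    field_simp
  rw [e1, e2, floor_nat_add_div l ht0 ht1, floor_nat_add_div l ht0 ht1]
  have hd : l / 2 ^ (j - i + 1) = l / 2 ^ (j - i) / 2 := by
    rw [Nat.div_div_eq_div_mul, ← pow_succ]
  have he : j - i + 1 - 1 = j - i := by omega
  rw [hd, he]
  omega

lemma dyadic_digit_high (l : ℕ) (t : ℝ) {j i : ℕ} (hij : j + 1 ≤ i) :
    dyadicDigit (((l : ℝ) + t) / 2 ^ j) i = dyadicDigit t (i - j) := by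
  unfold dyadicDigit
  have e1 : (2 : ℝ) ^ i * (((l : ℝ) + t) / 2 ^ j)
      = ((2 ^ (i - j) * l : ℤ) : ℝ) + 2 ^ (i - j) * t := by
    have hj2 : (2 : ℝ) ^ i = 2 ^ (i - j) * 2 ^ j := by
      rw [← pow_add]; congr 1; omega
    push_cast
    rw [hj2]
    field_simp
  have e2 : (2 : ℝ) ^ (i - 1) * (((l : ℝ) + t) / 2 ^ j)
      = ((2 ^ (i - 1 - j) * l : ℤ) : ℝ) + 2 ^ (i - 1 - j) * t := by
    have hj2 : (2 : ℝ) ^ (i - 1) = 2 ^ (i - 1 - j) * 2 ^ j := by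
      rw [← pow_add]; congr 1; omega
    push_cast
    rw [hj2]
    field_simp
  rw [e1, e2, Int.floor_intCast_add, Int.floor_intCast_add]
  have h1 : i - j = (i - 1 - j) + 1 := by omega
  have h2 : i - j - 1 = i - 1 - j := by omega
  rw [h2, h1, pow_succ]
  ring

lemma natDigit_div_pow (n j k : ℕ) (hk : 1 ≤ k) :
    natDigit (n / 2 ^ j) k = natDigit n (k + j) := by
  unfold natDigit
  rw [Nat.div_div_eq_div_mul, ← pow_add]
  have he : j + (k - 1) = k + j - 1 := by omega
  rw [he]

lemma walsh_shift (n j l : ℕ) {t : ℝ} (ht0 : 0 ≤ t) (ht1 : t < 1) :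
    walsh n (((l : ℝ) + t) / 2 ^ j) = walsh n ((l : ℝ) / 2 ^ j) * walsh (n / 2 ^ j) t := by
  have hM : n + 1 ≤ j + (n + 1) := by omega
  have hM' : n / 2 ^ j + 1 ≤ n + 1 := by
    have := Nat.div_le_self n (2 ^ j); omega
  rw [walsh_trunc n (((l : ℝ) + t) / 2 ^ j) hM, walsh_trunc n ((l : ℝ) / 2 ^ j) hM,
    walsh_trunc (n / 2 ^ j) t hM']
  have hIcc : ∀ K : ℕ, Finset.Icc 1 K = Finset.Ioc 0 K := fun K => Finset.Icc_add_one_left_eq_Ioc 0 K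
  rw [hIcc, hIcc]
  set A : ℕ → ℕ := fun i => (natDigit n i + natDigit n (i + 1)) * (dyadicDigit (((l : ℝ) + t) / 2 ^ j) i).toNat with hA
  set B : ℕ → ℕ := fun i => (natDigit n i + natDigit n (i + 1)) * (dyadicDigit ((l : ℝ) / 2 ^ j) i).toNat with hB
  set C : ℕ → ℕ := fun k => (natDigit (n / 2 ^ j) k + natDigit (n / 2 ^ j) (k + 1)) * (dyadicDigit t k).toNat with hC
  have hl0 : ((l : ℝ)) / 2 ^ j = ((l : ℝ) + 0) / 2 ^ j := by ring
  have hsplitA : ∑ i ∈ Finset.Ioc 0 (j + (n + 1)), A i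
      = ∑ i ∈ Finset.Ioc 0 j, A i + ∑ i ∈ Finset.Ioc j (j + (n + 1)), A i :=
    (Finset.sum_Ioc_consecutive A (Nat.zero_le j) (by omega)).symm
  have hsplitB : ∑ i ∈ Finset.Ioc 0 (j + (n + 1)), B i
      = ∑ i ∈ Finset.Ioc 0 j, B i + ∑ i ∈ Finset.Ioc j (j + (n + 1)), B i :=
    (Finset.sum_Ioc_consecutive B (Nat.zero_le j) (by omega)).symm
  have hBtail : ∑ i ∈ Finset.Ioc j (j + (n + 1)), B i = 0 := by
    apply Finset.sum_eq_zero
    intro i hi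
    simp only [Finset.mem_Ioc] at hi
    rw [hB]
    simp only
    rw [hl0, dyadic_digit_high l 0 (by omega)]
    have h0 : dyadicDigit 0 (i - j) = 0 := by
      unfold dyadicDigit; simp
    rw [h0]
    simp
  have hAB : ∑ i ∈ Finset.Ioc 0 j, A i = ∑ i ∈ Finset.Ioc 0 j, B i := by
    apply Finset.sum_congr rfl
    intro i hi
    simp only [Finset.mem_Ioc] at hi
    rw [hA, hB]
    simp only
    rw [dyadic_digit_low l ht0 ht1 hi.1 hi.2, hl0,
      dyadic_digit_low l le_rfl zero_lt_one hi.1 hi.2]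
  have hAC : ∑ i ∈ Finset.Ioc j (j + (n + 1)), A i = ∑ k ∈ Finset.Ioc 0 (n + 1), C k := by
    apply Finset.sum_nbij' (fun i => i - j) (fun k => k + j)
    · intro a ha; simp only [Finset.mem_Ioc] at ha ⊢; omega
    · intro a ha; simp only [Finset.mem_Ioc] at ha ⊢; omega
    · intro a ha; simp only [Finset.mem_Ioc] at ha; omega
    · intro a ha; simp only [Finset.mem_Ioc] at ha; omega
    · intro a ha
      simp only [Finset.mem_Ioc] at ha
      rw [hA, hC]
      simp only
      rw [dyadic_digit_high l t (by omega)]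
      rw [natDigit_div_pow n j (a - j) (by omega), natDigit_div_pow n j (a - j + 1) (by omega)]
      congr 3 <;> omega
  rw [hsplitA, hsplitB, hBtail, add_zero, hAB, hAC, pow_add]

lemma walsh_measurable (n : ℕ) : Measurable (walsh n) := by
  unfold walsh
  apply Measurable.pow measurable_const
  apply Finset.measurable_sum
  intro i _
  apply Measurable.mul measurable_const
  have hd : Measurable (fun x : ℝ => dyadicDigit x i) := by
    unfold dyadicDigit
    exact (Int.measurable_floor.comp (measurable_id.const_mul _)).sub
      (measurable_const.mul (Int.measurable_floor.comp (measurable_id.const_mul _)))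
  exact (measurable_of_countable Int.toNat).comp hd

/-- Left boundary scaling functions: for `ν ≥ 2`, `0 ≤ m ≤ ν−1`,
`φ_m^left ∈ L²(ℝ)` supported in `[0, ν+m]` and `2^j ≥ 2ν`, the Walsh coefficients of
`φ^bd_{j,m}(x) = 2^{j/2} φ_m^left(2^j x)` on `[0,1]` satisfy, for every `n ∈ ℕ`:
`∫₀¹ φ^bd_{j,m}(x) w_n(x) dx
  = Σ_{l=0}^{ν−1+m} 2^{−j/2} w_n(l/2^j) ∫₀¹ φ_m^left(x+l) w_{⌊n/2^j⌋}(x) dx`. -/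
theorem walsh_boundary_left_edge (ν : ℕ) (hν : 2 ≤ ν) (m : ℕ) (hm : m < ν)
    (φleft : ℝ → ℝ) (hL2 : MemLp φleft 2 volume)
    (hsupp : ∀ᵐ x : ℝ, x ∉ Set.Icc (0 : ℝ) ((ν : ℝ) + m) → φleft x = 0)
    (j : ℕ) (hj : 2 * ν ≤ 2 ^ j) (n : ℕ) :
    ∫ x in (0 : ℝ)..1, ((2 : ℝ) ^ ((j : ℝ) / 2) * φleft (2 ^ j * x)) * walsh n x =
      ∑ l ∈ Finset.Icc (0 : ℤ) ((ν : ℤ) - 1 + m),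
        (2 : ℝ) ^ (-(j : ℝ) / 2) * walsh n ((l : ℝ) / 2 ^ j) *
          ∫ x in (0 : ℝ)..1, φleft (x + l) * walsh (n / 2 ^ j) x := by
  have h2jpos : (0 : ℝ) < 2 ^ j := by positivity
  have c2j : ((2 : ℝ) ^ j) ≠ 0 := ne_of_gt h2jpos
  set n' := n / 2 ^ j with hn'
  set F : ℝ → ℝ := fun x => ((2 : ℝ) ^ ((j : ℝ) / 2) * φleft (2 ^ j * x)) * walsh n x with hF
  -- integrability of φleft
  have hφ : Integrable φleft volume := by
    have hs : MeasurableSet (Set.Icc (0 : ℝ) ((ν : ℝ) + m)) := measurableSet_Icc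
    have hfin : IsFiniteMeasure (volume.restrict (Set.Icc (0 : ℝ) ((ν : ℝ) + m))) := by
      constructor
      rw [Measure.restrict_apply_univ, Real.volume_Icc]
      exact ENNReal.ofReal_lt_top
    have h1 : IntegrableOn φleft (Set.Icc (0 : ℝ) ((ν : ℝ) + m)) volume :=
      (hL2.restrict _).integrable (by norm_num)
    have h2 : (Set.Icc (0 : ℝ) ((ν : ℝ) + m)).indicator φleft =ᵐ[volume] φleft := by
      filter_upwards [hsupp] with x hx
      by_cases hmem : x ∈ Set.Icc (0 : ℝ) ((ν : ℝ) + m)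
      · rw [Set.indicator_of_mem hmem]
      · rw [Set.indicator_of_notMem hmem, hx hmem]
    exact ((integrable_indicator_iff hs).2 h1).congr h2
  have hFint : Integrable F volume := by
    have hφc : Integrable (fun x => φleft ((2 : ℝ) ^ j * x)) volume := hφ.comp_mul_left' c2j
    have h := Integrable.bdd_mul (c := 1) (hφc.const_mul ((2 : ℝ) ^ ((j : ℝ) / 2)))
      (walsh_measurable n).aestronglyMeasurable
      (Filter.Eventually.of_forall fun x => by rw [Real.norm_eq_abs, walsh_abs])
    exact h.congr (Filter.Eventually.of_forall fun x => by simp only [hF]; ring)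
  -- value of each dyadic piece
  have hstep : ∀ l : ℕ,
      (∫ x in ((l : ℝ) / 2 ^ j)..(((l : ℝ) + 1) / 2 ^ j), F x)
        = (2 : ℝ) ^ (-(j : ℝ) / 2) * walsh n ((l : ℝ) / 2 ^ j)
            * ∫ x in (0 : ℝ)..1, φleft (x + (l : ℝ)) * walsh n' x := by
    intro l
    have hcomp := intervalIntegral.integral_comp_div (a := (l : ℝ)) (b := (l : ℝ) + 1)
      (c := (2 : ℝ) ^ j) (f := F) c2j
    have e1 : (∫ x in ((l : ℝ) / 2 ^ j)..(((l : ℝ) + 1) / 2 ^ j), F x)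
        = ((2 : ℝ) ^ j)⁻¹ * ∫ x in (l : ℝ)..((l : ℝ) + 1), F (x / 2 ^ j) := by
      rw [hcomp, smul_eq_mul, ← mul_assoc, inv_mul_cancel₀ c2j, one_mul]
    have hadd := intervalIntegral.integral_comp_add_right (a := (0 : ℝ)) (b := 1)
      (f := fun x => F (x / 2 ^ j)) ((l : ℝ))
    rw [zero_add, add_comm 1 (l : ℝ)] at hadd
    have e3 : (∫ x in (0 : ℝ)..1, F ((x + (l : ℝ)) / 2 ^ j))
        = ∫ x in (0 : ℝ)..1, ((2 : ℝ) ^ ((j : ℝ) / 2) * walsh n ((l : ℝ) / 2 ^ j))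
            * (φleft (x + (l : ℝ)) * walsh n' x) := by
      apply intervalIntegral.integral_congr_ae
      have h1 : ∀ᵐ t : ℝ, t ≠ (1 : ℝ) := by
        have hset : {a : ℝ | ¬ a ≠ 1} = {1} := by ext x; simp
        rw [ae_iff, hset]
        exact Real.volume_singleton
      filter_upwards [h1] with t ht1 htIoc
      rw [Set.uIoc_of_le zero_le_one] at htIoc
      have ht0 : 0 ≤ t := le_of_lt htIoc.1
      have htlt : t < 1 := lt_of_le_of_ne htIoc.2 ht1
      have harg : (2 : ℝ) ^ j * ((t + (l : ℝ)) / 2 ^ j) = t + (l : ℝ) := by field_simp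
      have hsh : walsh n ((t + (l : ℝ)) / 2 ^ j) = walsh n ((l : ℝ) / 2 ^ j) * walsh n' t := by
        rw [add_comm t (l : ℝ)]
        exact walsh_shift n j l ht0 htlt
      simp only [hF]
      rw [harg, hsh]
      ring
    have e4 : (∫ x in (0 : ℝ)..1, ((2 : ℝ) ^ ((j : ℝ) / 2) * walsh n ((l : ℝ) / 2 ^ j))
            * (φleft (x + (l : ℝ)) * walsh n' x))
        = ((2 : ℝ) ^ ((j : ℝ) / 2) * walsh n ((l : ℝ) / 2 ^ j))
            * ∫ x in (0 : ℝ)..1, φleft (x + (l : ℝ)) * walsh n' x :=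
      intervalIntegral.integral_const_mul _ _
    rw [e1, ← hadd, e3, e4]
    have hc : ((2 : ℝ) ^ j)⁻¹ * (2 : ℝ) ^ ((j : ℝ) / 2) = (2 : ℝ) ^ (-(j : ℝ) / 2) := by
      rw [← Real.rpow_natCast 2 j, ← Real.rpow_neg (by norm_num : (0 : ℝ) ≤ 2),
        ← Real.rpow_add (by norm_num : (0 : ℝ) < 2)]
      congr 1
      ring
    rw [← hc]
    ring
  -- vanishing of far pieces
  have hzero : ∀ l : ℕ, ν + m ≤ l →
      (∫ x in (0 : ℝ)..1, φleft (x + (l : ℝ)) * walsh n' x) = 0 := by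
    intro l hl
    have hshift : ∀ᵐ t : ℝ, (t + (l : ℝ)) ∉ Set.Icc (0 : ℝ) ((ν : ℝ) + m) → φleft (t + (l : ℝ)) = 0 :=
      (measurePreserving_add_right volume (l : ℝ)).quasiMeasurePreserving.ae hsupp
    have hz : (∫ x in (0 : ℝ)..1, φleft (x + (l : ℝ)) * walsh n' x)
        = ∫ _x in (0 : ℝ)..1, (0 : ℝ) := by
      apply intervalIntegral.integral_congr_ae
      filter_upwards [hshift] with t ht htIoc
      rw [Set.uIoc_of_le zero_le_one] at htIoc
      have hnot : (t + (l : ℝ)) ∉ Set.Icc (0 : ℝ) ((ν : ℝ) + m) := by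
        simp only [Set.mem_Icc, not_and_or, not_le]
        right
        have hlge : ((ν : ℝ) + m) ≤ (l : ℝ) := by exact_mod_cast hl
        linarith [htIoc.1]
      rw [ht hnot, zero_mul]
    rw [hz, intervalIntegral.integral_zero]
  -- split the integral into dyadic pieces
  have hsplit : (∫ x in (0 : ℝ)..1, F x)
      = ∑ l ∈ Finset.range (2 ^ j), ∫ x in ((l : ℝ) / 2 ^ j)..(((l : ℝ) + 1) / 2 ^ j), F x := by
    have hadj := intervalIntegral.sum_integral_adjacent_intervals (μ := volume) (f := F)
      (a := fun k : ℕ => (k : ℝ) / 2 ^ j) (n := 2 ^ j)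
      (fun k _ => hFint.intervalIntegrable)
    have h0 : ((0 : ℕ) : ℝ) / 2 ^ j = 0 := by norm_num
    have h1 : (((2 ^ j : ℕ)) : ℝ) / 2 ^ j = 1 := by
      push_cast
      field_simp
    rw [h0, h1] at hadj
    rw [← hadj]
    apply Finset.sum_congr rfl
    intro k _
    congr 1
    push_cast
    ring
  rw [hsplit, Finset.sum_congr rfl (fun l _ => hstep l)]
  have hsub : (∑ l ∈ Finset.range (2 ^ j), (2 : ℝ) ^ (-(j : ℝ) / 2) * walsh n ((l : ℝ) / 2 ^ j)
        * ∫ x in (0 : ℝ)..1, φleft (x + (l : ℝ)) * walsh n' x)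
      = ∑ l ∈ Finset.range (ν + m), (2 : ℝ) ^ (-(j : ℝ) / 2) * walsh n ((l : ℝ) / 2 ^ j)
        * ∫ x in (0 : ℝ)..1, φleft (x + (l : ℝ)) * walsh n' x := by
    symm
    apply Finset.sum_subset (Finset.range_subset_range.2 (by omega : ν + m ≤ 2 ^ j))
    intro l hl hnl
    simp only [Finset.mem_range] at hl hnl
    rw [hzero l (by omega), mul_zero]
  rw [hsub]
  apply Finset.sum_nbij' (fun l : ℕ => (l : ℤ)) (fun l : ℤ => l.toNat)
  · intro a ha
    simp only [Finset.mem_range] at ha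
    simp only [Finset.mem_Icc]
    omega
  · intro a ha
    simp only [Finset.mem_Icc] at ha
    simp only [Finset.mem_range]
    omega
  · intro a _
    simp
  · intro a ha
    simp only [Finset.mem_Icc] at ha
    omega
  · intro a _
    norm_num
end
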